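/- Let A be a uniform algebra on a compact Hausdorff space X and let x ∈ X be a point of continuity for A. Suppose E is a compact subset of X \ {x} such that {f² : f ∈ I(E)} is dense in I(E). Then x is a strong boundary point for A. -/

import Mathlib

open Set Metric Complex

noncomputable section

variable {X : Type*} [TopologicalSpace X]

/-- A point `x` is a point of continuity for a subalgebra `A` of `C(X)` if for every compact
set `E ⊆ X \ {x}` there is `f ∈ A` with `f x = 1` and `f ≡ 0` on `E`. -/
def IsPointOfContinuity (A : Subalgebra ℂ C(X, ℂ)) (x : X) : Prop :=
  ∀ E : Set X, IsCompact E → x ∉ E → ∃ f ∈ A, f x = 1 ∧ ∀ y ∈ E, f y = 0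

/-- `I(E)`: the ideal of functions in `A` vanishing identically on `E`. -/
def vanishIdeal (A : Subalgebra ℂ C(X, ℂ)) (E : Set X) : Set C(X, ℂ) :=
  {f | f ∈ A ∧ ∀ y ∈ E, f y = 0}

/-- A point `x` is a strong boundary point for `A` if for every open neighbourhood `U` of `x`
there is `f ∈ A` with `f x = 1 = |f|_X` and `|f(y)| < 1` for `y ∉ U`. -/
def IsStrongBoundaryPoint (A : Subalgebra ℂ C(X, ℂ)) (x : X) : Prop :=
  ∀ U : Set X, IsOpen U → x ∈ U →
    ∃ f ∈ A, f x = 1 ∧ (∀ y : X, ‖f y‖ ≤ 1) ∧ ∀ y ∉ U, ‖f y‖ < 1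

/-! ### Auxiliary arithmetic lemmas -/

private lemma sbp_arith1 {δ s b : ℝ} (hδ0 : 0 < δ) (hδ : δ ≤ 1/4) (hs : 0 ≤ s)
    (hb : b ≤ 1 + 3*δ + s) :
    Real.sqrt ((b + δ)/(1 - δ)) ≤ 1 + 3*δ + (2/3)*s := by
  have h1δ : (0:ℝ) < 1 - δ := by linarith
  have hsq : (b + δ)/(1 - δ) ≤ (1 + 3*δ + (2/3)*s)^2 := by
    rw [div_le_iff₀ h1δ]
    nlinarith [sq_nonneg s, sq_nonneg δ, mul_nonneg hs hδ0.le, sq_nonneg (s*δ),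
      mul_nonneg (mul_nonneg hs hδ0.le) hδ0.le]
  calc Real.sqrt ((b + δ)/(1 - δ)) ≤ Real.sqrt ((1 + 3*δ + (2/3)*s)^2) := Real.sqrt_le_sqrt hsq
    _ = 1 + 3*δ + (2/3)*s := Real.sqrt_sq (by linarith)

private lemma sbp_arith2 {r δ b : ℝ} (hb : 0 ≤ b) (hr : r ≤ b^2/4) (hδa : δ ≤ b^2/4)
    (hδ0 : 0 < δ) (hδ : δ ≤ 1/4) :
    Real.sqrt ((r + δ)/(1 - δ)) ≤ b := by
  have h1δ : (0:ℝ) < 1 - δ := by linarith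
  have hsq : (r + δ)/(1 - δ) ≤ b^2 := by
    rw [div_le_iff₀ h1δ]; nlinarith [sq_nonneg b]
  calc Real.sqrt ((r + δ)/(1 - δ)) ≤ Real.sqrt (b^2) := Real.sqrt_le_sqrt hsq
    _ = b := Real.sqrt_sq hb

private lemma sbp_pow_one_add_le {a : ℝ} (ha : 0 ≤ a) :
    ∀ m : ℕ, (m:ℝ) * a ≤ 1/2 → (1+a)^m ≤ 1 + 2*m*a := by
  intro m
  induction m with
  | zero => intro _; norm_num
  | succ n ih =>
    intro hm
    have hn : (n:ℝ) * a ≤ 1/2 := by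
      have h1 : (n:ℝ) ≤ (n:ℝ)+1 := by linarith
      calc (n:ℝ)*a ≤ ((n:ℝ)+1)*a := by nlinarith
        _ ≤ 1/2 := by push_cast at hm; linarith
    have h2 : (1+a)^(n+1) = (1+a)^n * (1+a) := by ring
    have h3 : (1+a)^n * (1+a) ≤ (1 + 2*n*a) * (1+a) :=
      mul_le_mul_of_nonneg_right (ih hn) (by linarith)
    have h4 : (1 + 2*(n:ℝ)*a) * (1+a) ≤ 1 + 2*((n:ℝ)+1)*a := by nlinarith
    push_cast
    calc (1+a)^(n+1) ≤ (1 + 2*(n:ℝ)*a) * (1+a) := h2 ▸ h3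
      _ ≤ 1 + 2*((n:ℝ)+1)*a := h4

/-! ### The square-root step -/

private lemma sbp_sqrt_step {X : Type*} [TopologicalSpace X] [CompactSpace X]
    {A : Subalgebra ℂ C(X, ℂ)} {E : Set X} {x : X}
    (hdense : vanishIdeal A E ⊆ closure ((fun f => f * f) '' vanishIdeal A E))
    {W : Set X} {h : C(X, ℂ)} (hh : h ∈ vanishIdeal A E) (hx1 : h x = 1)
    {B r δ : ℝ} (hB : ‖h‖ ≤ B) (hr : ∀ y, y ∉ W → ‖h y‖ ≤ r)
    (hδ0 : 0 < δ) (hδ : δ ≤ 1/4) :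
    ∃ h' ∈ vanishIdeal A E, h' x = 1 ∧ ‖h'‖ ≤ Real.sqrt ((B + δ)/(1 - δ)) ∧
      ∀ y, y ∉ W → ‖h' y‖ ≤ Real.sqrt ((r + δ)/(1 - δ)) := by
  have h1δ : (0:ℝ) < 1 - δ := by linarith
  have hcl := hdense hh
  rw [Metric.mem_closure_iff] at hcl
  obtain ⟨p, hp, hdist⟩ := hcl δ hδ0
  obtain ⟨g, hg, rfl⟩ := hp
  have hnorm : ‖h - g * g‖ ≤ δ := by
    rw [← dist_eq_norm]; exact hdist.le
  have key : ∀ y, ‖g y‖ ^ 2 ≤ ‖h y‖ + δ := by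
    intro y
    have h2 : ‖h y - g y * g y‖ ≤ δ := le_trans ((h - g * g).norm_coe_le_norm y) hnorm
    have h3 : ‖g y * g y‖ ≤ ‖h y‖ + δ := by
      calc ‖g y * g y‖ ≤ ‖h y‖ + ‖g y * g y - h y‖ := by
              have := norm_add_le (h y) (g y * g y - h y); simpa using this
        _ ≤ ‖h y‖ + δ := by rw [norm_sub_rev] at h2; linarith
    calc ‖g y‖^2 = ‖g y * g y‖ := by rw [norm_mul, sq]
      _ ≤ ‖h y‖ + δ := h3
  have hgx2 : 1 - δ ≤ ‖g x‖ ^ 2 := by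
    have h2 : ‖h x - g x * g x‖ ≤ δ := le_trans ((h - g * g).norm_coe_le_norm x) hnorm
    rw [hx1] at h2
    have h3 : ‖(1:ℂ)‖ - ‖g x * g x‖ ≤ δ := le_trans (norm_sub_norm_le _ _) h2
    rw [norm_one] at h3
    have h4 : ‖g x * g x‖ = ‖g x‖^2 := by rw [norm_mul, sq]
    linarith [h4 ▸ h3]
  have hgx0 : g x ≠ 0 := by
    intro hz
    rw [hz] at hgx2; simp at hgx2; linarith
  have main : ∀ (b : ℝ) (y : X), ‖h y‖ ≤ b →
      ‖((g x)⁻¹ • g) y‖ ≤ Real.sqrt ((b + δ)/(1 - δ)) := by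
    intro b y hy
    have hb0 : (0:ℝ) ≤ b := le_trans (norm_nonneg _) hy
    have hgyB : ‖g y‖^2 ≤ b + δ := le_trans (key y) (by linarith)
    have hval : ‖((g x)⁻¹ • g) y‖ = ‖g y‖ / ‖g x‖ := by
      simp [norm_smul, norm_inv]; ring
    rw [hval]
    apply (Real.le_sqrt (by positivity) (div_nonneg (by linarith) h1δ.le)).mpr
    rw [div_pow]
    exact div_le_div₀ (by linarith) hgyB h1δ hgx2
  refine ⟨(g x)⁻¹ • g, ⟨A.smul_mem hg.1 _, fun y hy => by
      simp [hg.2 y hy]⟩, by simp [inv_mul_cancel₀ hgx0], ?_, ?_⟩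
  · exact (ContinuousMap.norm_le _ (Real.sqrt_nonneg _)).mpr
      (fun y => main B y (le_trans (h.norm_coe_le_norm y) hB))
  · exact fun y hy => main r y (hr y hy)

/-! ### The approximate peaking function -/

private lemma sbp_approx_peak {X : Type*} [TopologicalSpace X] [CompactSpace X]
    {A : Subalgebra ℂ C(X, ℂ)} {x : X} (hx : IsPointOfContinuity A x)
    {E : Set X} (hE : IsCompact E) (hxE : x ∉ E)
    (hdense : vanishIdeal A E ⊆ closure ((fun f => f * f) '' vanishIdeal A E))
    {W : Set X} (hW : IsOpen W) (hxW : x ∈ W) {ε : ℝ} (hε0 : 0 < ε) (hε1 : ε ≤ 1) :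
    ∃ u ∈ A, u x = 1 ∧ (∀ y, ‖u y‖ ≤ 1 + ε) ∧ ∀ y, y ∉ W → ‖u y‖ ≤ ε := by
  classical
  have hcpt : IsCompact (E ∪ Wᶜ) := hE.union (hW.isClosed_compl.isCompact)
  have hxnot : x ∉ E ∪ Wᶜ := by
    intro hmem
    rcases hmem with hm | hm
    · exact hxE hm
    · exact hm hxW
  obtain ⟨f₀, hf₀A, hf₀x, hf₀z⟩ := hx (E ∪ Wᶜ) hcpt hxnot
  have hf₀I : f₀ ∈ vanishIdeal A E := ⟨hf₀A, fun y hy => hf₀z y (Or.inl hy)⟩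
  have hf₀W : ∀ y, y ∉ W → f₀ y = 0 := fun y hy => hf₀z y (Or.inr hy)
  set M : ℝ := ‖f₀‖ with hM
  have hM1 : 1 ≤ M := by
    have := f₀.norm_coe_le_norm x
    rw [hf₀x] at this; simpa using this
  obtain ⟨k, hk⟩ : ∃ k : ℕ, (2/3:ℝ)^k < ε/(2*M) :=
    exists_pow_lt_of_lt_one (by positivity) (by norm_num)
  set e : ℕ → ℝ := fun j => (fun t => t^2/4)^[j] ε with he
  have he_succ : ∀ j, e (j+1) = (e j)^2/4 := by
    intro j; simp only [he, Function.iterate_succ_apply']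
  have he_pos : ∀ j, 0 < e j := by
    intro j; induction j with
    | zero => simpa [he] using hε0
    | succ n ih => rw [he_succ]; positivity
  have he_le : ∀ j, e j ≤ 1 := by
    intro j; induction j with
    | zero => simpa [he] using hε1
    | succ n ih => rw [he_succ]; nlinarith [he_pos n]
  have he_anti : ∀ i j : ℕ, i ≤ j → e j ≤ e i := by
    intro i j hij
    induction j with
    | zero => simp at hij; simp [hij]
    | succ n ih =>
      rcases Nat.lt_or_ge i (n+1) with hlt | hge
      · have h1 : e (n+1) ≤ e n := by rw [he_succ]; nlinarith [he_pos n, he_le n]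
        exact le_trans h1 (ih (Nat.lt_succ_iff.mp hlt))
      · have : i = n+1 := le_antisymm hij hge
        simp [this]
  set δ : ℝ := min (1/4) (min (ε/6) (e k)) with hδdef
  have hδ0 : 0 < δ := lt_min (by norm_num) (lt_min (by positivity) (he_pos k))
  have hδ4 : δ ≤ 1/4 := min_le_left _ _
  have hδε : δ ≤ ε/6 := le_trans (min_le_right _ _) (min_le_left _ _)
  have hδek : δ ≤ e k := le_trans (min_le_right _ _) (min_le_right _ _)
  set φ : ℝ → ℝ := fun b => Real.sqrt ((b + δ) / (1 - δ)) with hφ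
  have hφ_succ : ∀ (t : ℝ) (j : ℕ), φ^[j+1] t = φ (φ^[j] t) := by
    intro t j; rw [Function.iterate_succ_apply']
  have hexists : ∀ j : ℕ, ∃ h ∈ vanishIdeal A E, h x = 1 ∧ ‖h‖ ≤ φ^[j] M ∧
      ∀ y, y ∉ W → ‖h y‖ ≤ φ^[j] (0:ℝ) := by
    intro j
    induction j with
    | zero =>
      exact ⟨f₀, hf₀I, hf₀x, by simp; exact le_rfl, fun y hy => by simp [hf₀W y hy]⟩
    | succ n ih =>
      obtain ⟨h, hhI, hhx, hhB, hhr⟩ := ih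
      obtain ⟨h', hI', hx', hB', hr'⟩ := sbp_sqrt_step hdense hhI hhx hhB hhr hδ0 hδ4
      exact ⟨h', hI', hx', by rw [hφ_succ]; exact hB',
        fun y hy => by rw [hφ_succ]; exact hr' y hy⟩
  have hBbound : ∀ j, φ^[j] M ≤ 1 + 3*δ + (2/3)^j * M := by
    intro j
    induction j with
    | zero => simp; linarith
    | succ n ih =>
      rw [hφ_succ]
      have hs : (0:ℝ) ≤ (2/3)^n * M := by positivity
      calc φ (φ^[n] M) ≤ 1 + 3*δ + (2/3) * ((2/3)^n * M) := sbp_arith1 hδ0 hδ4 hs ih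
        _ = 1 + 3*δ + (2/3)^(n+1) * M := by ring
  have hrbound : ∀ j, j ≤ k → φ^[j] (0:ℝ) ≤ e (k - j) := by
    intro j
    induction j with
    | zero => intro _; simpa using (he_pos k).le
    | succ n ih =>
      intro hnk
      have hn : n ≤ k := Nat.le_of_succ_le hnk
      have hkn : k - n = (k - (n+1)) + 1 := by omega
      have hbpos : 0 ≤ e (k - (n+1)) := (he_pos _).le
      have hrn : φ^[n] (0:ℝ) ≤ (e (k - (n+1)))^2/4 := by
        have := ih hn
        rw [hkn, he_succ] at this; exact this
      have hδn : δ ≤ (e (k - (n+1)))^2/4 := by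
        have h1 : e k ≤ e (k - n) := he_anti _ _ (Nat.sub_le _ _)
        rw [hkn, he_succ] at h1
        exact le_trans hδek h1
      rw [hφ_succ]
      exact sbp_arith2 hbpos hrn hδn hδ0 hδ4
  obtain ⟨u, huI, hux, huB, hur⟩ := hexists k
  have hBk : φ^[k] M ≤ 1 + ε := by
    have h1 := hBbound k
    have h2 : (2/3:ℝ)^k * M < ε/2 := by
      calc (2/3:ℝ)^k * M = M * (2/3)^k := by ring
        _ < M * (ε/(2*M)) := mul_lt_mul_of_pos_left hk (by positivity)
        _ = ε/2 := by field_simp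
    linarith
  have hrk : φ^[k] (0:ℝ) ≤ ε := by
    have := hrbound k le_rfl
    simpa [he] using this
  exact ⟨u, huI.1, hux, fun y => le_trans (u.norm_coe_le_norm y) (le_trans huB hBk),
    fun y hy => le_trans (hur y hy) hrk⟩

/-! ### The bump function: exact vanishing off `V`, norm at most `5/4`, value `1` at `x` -/

private lemma sbp_bump {X : Type*} [TopologicalSpace X] [CompactSpace X]
    {A : Subalgebra ℂ C(X, ℂ)} {x : X} (hx : IsPointOfContinuity A x)
    {E : Set X} (hE : IsCompact E) (hxE : x ∉ E)
    (hdense : vanishIdeal A E ⊆ closure ((fun f => f * f) '' vanishIdeal A E))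
    {V : Set X} (hV : IsOpen V) (hxV : x ∈ V) :
    ∃ h ∈ A, h x = 1 ∧ (∀ y, ‖h y‖ ≤ 5/4) ∧ ∀ y, y ∉ V → h y = 0 := by
  classical
  obtain ⟨f₀, hf₀A, hf₀x, hf₀z⟩ := hx Vᶜ (hV.isClosed_compl.isCompact) (fun hc => hc hxV)
  set M : ℝ := ‖f₀‖ with hMdef
  obtain ⟨m, hm⟩ : ∃ m : ℕ, M < 2^m := pow_unbounded_of_one_lt M one_lt_two
  set ε : ℝ := min (1/2) (1/(32*(m+1))) with hεdef
  have hε0 : 0 < ε := lt_min (by norm_num) (by positivity)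
  have hε1 : ε ≤ 1 := le_trans (min_le_left _ _) (by norm_num)
  have hεhalf : ε ≤ 1/2 := min_le_left _ _
  have hεm : (m:ℝ) * ε ≤ 1/32 := by
    have h1 : ε ≤ 1/(32*(m+1)) := min_le_right _ _
    have h2 : (m:ℝ) * ε ≤ (m:ℝ) * (1/(32*(m+1))) :=
      mul_le_mul_of_nonneg_left h1 (by positivity)
    have h3 : (m:ℝ) * (1/(32*(m+1))) ≤ 1/32 := by
      rw [mul_one_div, div_le_div_iff₀ (by positivity) (by norm_num)]
      nlinarith [Nat.cast_nonneg (α := ℝ) m]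
    linarith
  set W : Set X := V ∩ f₀ ⁻¹' (Metric.ball (1:ℂ) (1/16)) with hWdef
  have hWopen : IsOpen W := hV.inter (Metric.isOpen_ball.preimage f₀.continuous)
  have hxW : x ∈ W := ⟨hxV, by simp [hf₀x]⟩
  obtain ⟨u, huA, hux, huB, hur⟩ := sbp_approx_peak hx hE hxE hdense hWopen hxW hε0 hε1
  refine ⟨f₀ * u^m, A.mul_mem hf₀A (pow_mem huA m), ?_, ?_, ?_⟩
  · show f₀ x * (u^m) x = 1
    have h1 : (u^m) x = (u x)^m := by simp
    rw [h1, hf₀x, hux]; simp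
  · intro y
    have hval : ‖(f₀ * u^m) y‖ = ‖f₀ y‖ * ‖u y‖^m := by
      show ‖f₀ y * (u^m) y‖ = _
      rw [norm_mul]; congr 1; simp [norm_pow]
    rw [hval]
    by_cases hyW : y ∈ W
    · have h1 : ‖f₀ y‖ ≤ 17/16 := by
        have hball := hyW.2
        simp only [Set.mem_preimage, Metric.mem_ball, dist_eq_norm] at hball
        calc ‖f₀ y‖ = ‖(f₀ y - 1) + 1‖ := by ring_nf
          _ ≤ ‖f₀ y - 1‖ + ‖(1:ℂ)‖ := norm_add_le _ _
          _ ≤ 1/16 + 1 := by rw [norm_one]; linarith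
          _ = 17/16 := by norm_num
      have h2 : ‖u y‖^m ≤ (1+ε)^m := pow_le_pow_left₀ (norm_nonneg _) (huB y) m
      have h3 : (1+ε)^m ≤ 1 + 2*m*ε := sbp_pow_one_add_le hε0.le m (by linarith)
      have h4 : 1 + 2*(m:ℝ)*ε ≤ 17/16 := by linarith
      calc ‖f₀ y‖ * ‖u y‖^m ≤ (17/16) * (17/16) :=
            mul_le_mul h1 (le_trans h2 (le_trans h3 h4)) (by positivity) (by norm_num)
        _ ≤ 5/4 := by norm_num
    · have h1 : ‖f₀ y‖ ≤ M := f₀.norm_coe_le_norm y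
      have h2 : ‖u y‖^m ≤ (1/2)^m :=
        pow_le_pow_left₀ (norm_nonneg _) (le_trans (hur y hyW) hεhalf) m
      have h3 : M * (1/2:ℝ)^m ≤ 1 := by
        have h2m : (0:ℝ) < 2^m := by positivity
        have heq : M * (1/2:ℝ)^m = M / 2^m := by
          rw [div_pow, one_pow]; ring
        rw [heq, div_le_one h2m]
        exact hm.le
      calc ‖f₀ y‖ * ‖u y‖^m ≤ M * (1/2:ℝ)^m :=
            mul_le_mul h1 h2 (by positivity) (norm_nonneg _)
        _ ≤ 1 := h3
        _ ≤ 5/4 := by norm_num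
  · intro y hy
    show f₀ y * (u^m) y = 0
    rw [hf₀z y hy, zero_mul]

/-! ### The recursive construction -/

private noncomputable def sbpSeq {X : Type*} [TopologicalSpace X] [CompactSpace X]
    (U : Set X) (χ : Set X → C(X, ℂ)) : ℕ → Set X × C(X, ℂ)
  | 0 => (U, 0)
  | n+1 =>
      let p := sbpSeq U χ n
      let T := p.2 + ((2:ℂ)⁻¹) ^ (n+1) • χ p.1
      (p.1 ∩ (fun y => ‖T y‖) ⁻¹' Set.Iio (1 - (3/4) * (2⁻¹:ℝ) ^ (n+1)), T)

private lemma sbpSeq_succ_snd {X : Type*} [TopologicalSpace X] [CompactSpace X]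
    (U : Set X) (χ : Set X → C(X, ℂ)) (n : ℕ) :
    (sbpSeq U χ (n+1)).2 = (sbpSeq U χ n).2 + ((2:ℂ)⁻¹) ^ (n+1) • χ (sbpSeq U χ n).1 := rfl

private lemma sbpSeq_succ_fst {X : Type*} [TopologicalSpace X] [CompactSpace X]
    (U : Set X) (χ : Set X → C(X, ℂ)) (n : ℕ) :
    (sbpSeq U χ (n+1)).1 = (sbpSeq U χ n).1 ∩
      (fun y => ‖(sbpSeq U χ (n+1)).2 y‖) ⁻¹' Set.Iio (1 - (3/4) * (2⁻¹:ℝ) ^ (n+1)) := rfl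

private lemma sbpSeq_zero {X : Type*} [TopologicalSpace X] [CompactSpace X]
    (U : Set X) (χ : Set X → C(X, ℂ)) : sbpSeq U χ 0 = (U, 0) := rfl

/-- **Lemma 3.3.** Let `A` be a uniform algebra on a compact Hausdorff space `X` and let `x`
be a point of continuity for `A`. Suppose that `E` is a compact subset of `X \ {x}` such that
`{f² : f ∈ I(E)}` is dense in `I(E)`. Then `x` is a strong boundary point for `A`. -/
theorem strong_boundary_of_point_of_continuity
    {X : Type*} [TopologicalSpace X] [CompactSpace X] [T2Space X]
    (A : Subalgebra ℂ C(X, ℂ)) (hAclosed : IsClosed (A : Set C(X, ℂ)))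
    (hAsep : ∀ x y : X, x ≠ y → ∃ f ∈ A, f x ≠ f y)
    (x : X) (hx : IsPointOfContinuity A x)
    (E : Set X) (hE : IsCompact E) (hxE : x ∉ E)
    (hdense : vanishIdeal A E ⊆ closure ((fun f => f * f) '' vanishIdeal A E)) :
    IsStrongBoundaryPoint A x := by
  classical
  intro U hU hxU
  have hchoice : ∀ V : Set X, ∃ h : C(X, ℂ), IsOpen V → x ∈ V →
      h ∈ A ∧ h x = 1 ∧ (∀ y, ‖h y‖ ≤ 5/4) ∧ ∀ y, y ∉ V → h y = 0 := by
    intro V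
    by_cases hV : IsOpen V ∧ x ∈ V
    · obtain ⟨h, h1, h2, h3, h4⟩ := sbp_bump hx hE hxE hdense hV.1 hV.2
      exact ⟨h, fun _ _ => ⟨h1, h2, h3, h4⟩⟩
    · exact ⟨0, fun hopen hmem => absurd ⟨hopen, hmem⟩ hV⟩
  choose χ hχ using hchoice
  have hInv : ∀ n, IsOpen (sbpSeq U χ n).1 ∧ x ∈ (sbpSeq U χ n).1 ∧ (sbpSeq U χ n).2 ∈ A ∧
      (sbpSeq U χ n).2 x = 1 - ((2:ℂ)⁻¹)^n := by
    intro n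
    induction n with
    | zero =>
      refine ⟨hU, hxU, A.zero_mem, by rw [sbpSeq_zero]; simp⟩
    | succ n ih =>
      obtain ⟨hVo, hVx, hTA, hTx⟩ := ih
      obtain ⟨hA1, hx1, hb1, hz1⟩ := hχ (sbpSeq U χ n).1 hVo hVx
      have hTx1 : (sbpSeq U χ (n+1)).2 x = 1 - ((2:ℂ)⁻¹)^(n+1) := by
        rw [sbpSeq_succ_snd]
        show (sbpSeq U χ n).2 x + ((2:ℂ)⁻¹) ^ (n+1) * (χ (sbpSeq U χ n).1) x = _
        rw [hTx, hx1, mul_one]; ring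
      have hnormTx : ‖(sbpSeq U χ (n+1)).2 x‖ = 1 - (2⁻¹:ℝ)^(n+1) := by
        rw [hTx1]
        have hcast : (1 - ((2:ℂ)⁻¹)^(n+1)) = (((1 - (2⁻¹:ℝ)^(n+1) : ℝ)) : ℂ) := by
          push_cast; ring
        rw [hcast, Complex.norm_real]
        have h1 : (2⁻¹:ℝ)^(n+1) ≤ 1 := by
          apply pow_le_one₀ <;> norm_num
        exact abs_of_nonneg (by linarith)
      refine ⟨?_, ?_, ?_, hTx1⟩
      · rw [sbpSeq_succ_fst]
        exact hVo.inter (IsOpen.preimage (by continuity) isOpen_Iio)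
      · rw [sbpSeq_succ_fst]
        refine ⟨hVx, ?_⟩
        show ‖(sbpSeq U χ (n+1)).2 x‖ < 1 - (3/4) * (2⁻¹:ℝ)^(n+1)
        rw [hnormTx]
        have : (0:ℝ) < (2⁻¹:ℝ)^(n+1) := by positivity
        linarith
      · rw [sbpSeq_succ_snd]
        exact A.add_mem hTA (A.smul_mem hA1 _)
  have hVmono : ∀ n m : ℕ, n ≤ m → (sbpSeq U χ m).1 ⊆ (sbpSeq U χ n).1 := by
    intro n m hnm
    induction m with
    | zero => rw [Nat.le_zero] at hnm; subst hnm; exact subset_rfl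
    | succ k ih =>
      rcases Nat.lt_or_ge n (k+1) with hlt | hge
      · refine subset_trans ?_ (ih (Nat.lt_succ_iff.mp hlt))
        rw [sbpSeq_succ_fst]; exact Set.inter_subset_left
      · have : n = k+1 := le_antisymm hnm hge
        subst this; exact subset_rfl
  have htail : ∀ n y, y ∉ (sbpSeq U χ n).1 → ∀ m, n ≤ m →
      (sbpSeq U χ m).2 y = (sbpSeq U χ n).2 y := by
    intro n y hy m hnm
    induction m with
    | zero => rw [Nat.le_zero] at hnm; subst hnm; rfl
    | succ k ih =>
      rcases Nat.lt_or_ge n (k+1) with hlt | hge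
      · have hk : n ≤ k := Nat.lt_succ_iff.mp hlt
        have hyk : y ∉ (sbpSeq U χ k).1 := fun hc => hy (hVmono n k hk hc)
        obtain ⟨hVo, hVx, -, -⟩ := hInv k
        have hz := (hχ (sbpSeq U χ k).1 hVo hVx).2.2.2 y hyk
        rw [sbpSeq_succ_snd]
        show (sbpSeq U χ k).2 y + ((2:ℂ)⁻¹) ^ (k+1) * (χ (sbpSeq U χ k).1) y = _
        rw [hz, mul_zero, add_zero]
        exact ih hk
      · have : n = k+1 := le_antisymm hnm hge
        subst this; rfl
  have hthresh : ∀ n y, y ∈ (sbpSeq U χ n).1 →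
      ‖(sbpSeq U χ n).2 y‖ ≤ 1 - (3/4) * (2⁻¹:ℝ)^n := by
    intro n y hy
    cases n with
    | zero =>
      show ‖(0 : C(X,ℂ)) y‖ ≤ 1 - (3/4) * (2⁻¹:ℝ)^0
      simp; norm_num
    | succ k =>
      rw [sbpSeq_succ_fst] at hy
      exact hy.2.le
  have hstep : ∀ n y, ‖(sbpSeq U χ (n+1)).2 y - (sbpSeq U χ n).2 y‖ ≤ (5/4) * (2⁻¹:ℝ)^(n+1) := by
    intro n y
    obtain ⟨hVo, hVx, -, -⟩ := hInv n
    obtain ⟨-, -, hb1, -⟩ := hχ (sbpSeq U χ n).1 hVo hVx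
    have heq : (sbpSeq U χ (n+1)).2 y - (sbpSeq U χ n).2 y
        = ((2:ℂ)⁻¹) ^ (n+1) * (χ (sbpSeq U χ n).1) y := by
      rw [sbpSeq_succ_snd]
      show ((sbpSeq U χ n).2 y + ((2:ℂ)⁻¹) ^ (n+1) * (χ (sbpSeq U χ n).1) y) - _ = _
      ring
    rw [heq, norm_mul]
    have h1 : ‖((2:ℂ)⁻¹) ^ (n+1)‖ = (2⁻¹:ℝ)^(n+1) := by simp
    rw [h1, mul_comm]
    exact mul_le_mul_of_nonneg_right (hb1 y) (by positivity)
  have hcauchy : CauchySeq (fun n => (sbpSeq U χ n).2) := by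
    apply cauchySeq_of_le_geometric (1/2 : ℝ) (5/8) (by norm_num)
    intro n
    rw [dist_eq_norm]
    have hb : ∀ y, ‖((sbpSeq U χ n).2 - (sbpSeq U χ (n+1)).2) y‖ ≤ (5/8) * (1/2:ℝ)^n := by
      intro y
      have h1 := hstep n y
      have h2 : ((sbpSeq U χ n).2 - (sbpSeq U χ (n+1)).2) y
          = -((sbpSeq U χ (n+1)).2 y - (sbpSeq U χ n).2 y) := by
        show (sbpSeq U χ n).2 y - (sbpSeq U χ (n+1)).2 y = _
        ring
      rw [h2, norm_neg]
      calc ‖(sbpSeq U χ (n+1)).2 y - (sbpSeq U χ n).2 y‖ ≤ (5/4) * (2⁻¹:ℝ)^(n+1) := h1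
        _ = (5/8) * (1/2:ℝ)^n := by
            rw [pow_succ]; norm_num; ring
    exact (ContinuousMap.norm_le _ (by positivity)).mpr hb
  obtain ⟨f, hf⟩ := cauchySeq_tendsto_of_complete hcauchy
  have hfA : f ∈ A := hAclosed.mem_of_tendsto hf
    (Filter.Eventually.of_forall (fun n => (hInv n).2.2.1))
  have heval : ∀ y, Filter.Tendsto (fun n => (sbpSeq U χ n).2 y) Filter.atTop (nhds (f y)) :=
    fun y => ((ContinuousEvalConst.continuous_eval_const y).tendsto f).comp hf
  have hfx : f x = 1 := by
    have h1 : Filter.Tendsto (fun n => (sbpSeq U χ n).2 x) Filter.atTop (nhds 1) := by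
      have h2 : (fun n => (sbpSeq U χ n).2 x) = fun n => 1 - ((2:ℂ)⁻¹)^n := by
        funext n; exact (hInv n).2.2.2
      rw [h2]
      have h3 : Filter.Tendsto (fun n : ℕ => ((2:ℂ)⁻¹)^n) Filter.atTop (nhds 0) :=
        tendsto_pow_atTop_nhds_zero_of_norm_lt_one (by norm_num)
      simpa using (tendsto_const_nhds (x := (1:ℂ))).sub h3
    exact tendsto_nhds_unique (heval x) h1
  have hbound : ∀ y, ‖f y‖ ≤ 1 := by
    intro y
    by_cases hall : ∀ n, y ∈ (sbpSeq U χ n).1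
    · apply le_of_tendsto (((continuous_norm.tendsto (f y)).comp (heval y)))
      apply Filter.Eventually.of_forall
      intro n
      have h1 := hthresh n y (hall n)
      have h2 : (0:ℝ) ≤ (3/4) * (2⁻¹:ℝ)^n := by positivity
      calc ‖(sbpSeq U χ n).2 y‖ ≤ 1 - (3/4) * (2⁻¹:ℝ)^n := h1
        _ ≤ 1 := by linarith
    · push_neg at hall
      obtain ⟨n₀, hn₀⟩ := hall
      have hex : ∃ n, y ∉ (sbpSeq U χ n).1 := ⟨n₀, hn₀⟩
      set k := Nat.find hex with hkdef
      have hknot : y ∉ (sbpSeq U χ k).1 := Nat.find_spec hex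
      have hconst : ∀ m, k ≤ m → (sbpSeq U χ m).2 y = (sbpSeq U χ k).2 y :=
        fun m hm => htail k y hknot m hm
      have hfy : f y = (sbpSeq U χ k).2 y := by
        have h1 : Filter.Tendsto (fun n => (sbpSeq U χ n).2 y) Filter.atTop
            (nhds ((sbpSeq U χ k).2 y)) := by
          apply Filter.Tendsto.congr' ?_ tendsto_const_nhds
          filter_upwards [Filter.eventually_ge_atTop k] with m hm
          exact (hconst m hm).symm
        exact tendsto_nhds_unique (heval y) h1
      rw [hfy]
      cases hk0 : k with
      | zero =>
        show ‖(0 : C(X,ℂ)) y‖ ≤ 1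
        simp
      | succ j =>
        have hjmem : y ∈ (sbpSeq U χ j).1 := by
          by_contra hc
          have hjlt : j < Nat.find hex := by rw [← hkdef, hk0]; exact j.lt_succ_self
          exact Nat.find_min hex hjlt hc
        have h1 := hthresh j y hjmem
        have h2 := hstep j y
        have h3 : ‖(sbpSeq U χ (j+1)).2 y‖ ≤ ‖(sbpSeq U χ j).2 y‖ + (5/4) * (2⁻¹:ℝ)^(j+1) := by
          calc ‖(sbpSeq U χ (j+1)).2 y‖
              = ‖(sbpSeq U χ j).2 y + ((sbpSeq U χ (j+1)).2 y - (sbpSeq U χ j).2 y)‖ := by ring_nf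
            _ ≤ ‖(sbpSeq U χ j).2 y‖ + ‖(sbpSeq U χ (j+1)).2 y - (sbpSeq U χ j).2 y‖ :=
                norm_add_le _ _
            _ ≤ _ := by linarith
        have h4 : (5/4) * (2⁻¹:ℝ)^(j+1) = (5/8) * (2⁻¹:ℝ)^j := by
          rw [pow_succ]; ring
        have h5 : (0:ℝ) ≤ (2⁻¹:ℝ)^j := by positivity
        calc ‖(sbpSeq U χ (j+1)).2 y‖ ≤ (1 - (3/4) * (2⁻¹:ℝ)^j) + (5/8) * (2⁻¹:ℝ)^j := by
              rw [← h4]; linarith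
          _ = 1 - (1/8) * (2⁻¹:ℝ)^j := by ring
          _ ≤ 1 := by linarith
  have hoffU : ∀ y, y ∉ U → ‖f y‖ < 1 := by
    intro y hy
    have hk0 : y ∉ (sbpSeq U χ 0).1 := by rw [sbpSeq_zero]; exact hy
    have hfy : f y = (sbpSeq U χ 0).2 y := by
      have h1 : Filter.Tendsto (fun n => (sbpSeq U χ n).2 y) Filter.atTop
          (nhds ((sbpSeq U χ 0).2 y)) := by
        apply Filter.Tendsto.congr' ?_ tendsto_const_nhds
        filter_upwards [Filter.eventually_ge_atTop 0] with m hm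
        exact (htail 0 y hk0 m hm).symm
      exact tendsto_nhds_unique (heval y) h1
    rw [hfy]
    show ‖(0 : C(X,ℂ)) y‖ < 1
    simp
  exact ⟨f, hfA, hfx, hbound, hoffU⟩

end
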